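/- A distribution function G is regular in the sense of O'Brien (i.e. G(G_*−) = 1 and lim_{x→G_*−} (1 − G(x−))/(1 − G(x)) = 1, where G_* = sup{x : G(x) < 1}) if and only if for some γ ∈ (0,1) there exists a sequence of real numbers (v_n) such that G(v_n)^n → γ. -/

import Mathlib

open MeasureTheory Filter Topology Set

noncomputable section

/-- Event that the partial maximum `max_{0 ≤ j ≤ n-1} X_j` is at most `x`
(empty maximum interpreted as `-∞`, so the event is everything for `n = 0`). -/
def maxEvent {Ω : Type*} (X : ℕ → Ω → ℝ) (n : ℕ) (x : ℝ) : Set Ω :=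
  {ω | ∀ j < n, X j ω ≤ x}

/-- `G` is a distribution function: nondecreasing, right-continuous, with limits
`0` at `-∞` and `1` at `+∞`. -/
def IsDistFun (G : ℝ → ℝ) : Prop :=
  Monotone G ∧ (∀ x, ContinuousWithinAt G (Set.Ici x) x) ∧
    Tendsto G atBot (nhds 0) ∧ Tendsto G atTop (nhds 1)

/-- `G` is a phantom distribution function for `X` under `P`:
`sup_x |P(M_n ≤ x) - G(x)^n| → 0`. -/
def IsPhantom {Ω : Type*} [MeasurableSpace Ω] (P : Measure Ω) (X : ℕ → Ω → ℝ)
    (G : ℝ → ℝ) : Prop :=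
  Tendsto (fun n => ⨆ x : ℝ, |(P (maxEvent X n x)).toReal - G x ^ n|) atTop (nhds 0)

/-- The right end `G_* = sup {x : G x < 1}`, as an extended real. -/
def GstarE (G : ℝ → ℝ) : EReal := sSup ((fun x : ℝ => (x : EReal)) '' {x | G x < 1})

/-- The filter of real numbers approaching `c ∈ (-∞, +∞]` strictly from the left
(equals `atTop` when `c = ⊤`). -/
def leftFilter (c : EReal) : Filter ℝ :=
  Filter.comap (fun x : ℝ => (x : EReal)) (nhdsWithin c (Set.Iio c))

/-- Regularity in the sense of O'Brien: `G(G_*-) = 1` and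
`(1 - G(x-))/(1 - G(x)) → 1` as `x → G_*-`. -/
def IsRegularDF (G : ℝ → ℝ) : Prop :=
  Tendsto G (leftFilter (GstarE G)) (nhds 1) ∧
    Tendsto (fun x => (1 - Function.leftLim G x) / (1 - G x))
      (leftFilter (GstarE G)) (nhds 1)

namespace OBrien

variable {G : ℝ → ℝ} {c : EReal}

lemma nonneg (hG : IsDistFun G) (x : ℝ) : 0 ≤ G x :=
  le_of_tendsto hG.2.2.1 (eventually_atBot.2 ⟨x, fun _ hy => hG.1 hy⟩)

lemma le_one (hG : IsDistFun G) (x : ℝ) : G x ≤ 1 :=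
  ge_of_tendsto hG.2.2.2 (eventually_atTop.2 ⟨x, fun _ hy => hG.1 hy⟩)

lemma lt_one_of_lt_gstar (hG : IsDistFun G) {x : ℝ} (h : (x : EReal) < GstarE G) : G x < 1 := by
  rw [GstarE, lt_sSup_iff] at h
  obtain ⟨b, ⟨y, hy, rfl⟩, hxb⟩ := h
  exact lt_of_le_of_lt (hG.1 (le_of_lt (EReal.coe_lt_coe_iff.1 hxb))) hy

lemma le_gstar {x : ℝ} (h : G x < 1) : (x : EReal) ≤ GstarE G :=
  le_sSup ⟨x, h, rfl⟩

lemma bot_lt_gstar (hG : IsDistFun G) : (⊥ : EReal) < GstarE G := by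
  obtain ⟨x, hx⟩ := (hG.2.2.1.eventually_lt_const (by norm_num : (0:ℝ) < 1)).exists
  exact lt_of_lt_of_le (EReal.bot_lt_coe x) (le_gstar hx)

lemma leftFilter_neBot (h : (⊥ : EReal) < c) : (leftFilter c).NeBot := by
  rw [leftFilter]
  apply Filter.comap_neBot
  intro t ht
  rw [mem_nhdsWithin] at ht
  obtain ⟨u, hu, hcu, hut⟩ := ht
  obtain ⟨l', ⟨_, hl'c⟩, hsub⟩ := exists_Ioc_subset_of_mem_nhds' (hu.mem_nhds hcu) h
  obtain ⟨q, hq1, hq2⟩ := EReal.exists_rat_btwn_of_lt hl'c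
  exact ⟨(q : ℝ), hut ⟨hsub ⟨hq1, le_of_lt hq2⟩, hq2⟩⟩

lemma Iio_mem_leftFilter : {x : ℝ | (x : EReal) < c} ∈ leftFilter c :=
  preimage_mem_comap self_mem_nhdsWithin

lemma Ioo_mem_leftFilter {r : ℝ} (h : (r : EReal) < c) :
    {x : ℝ | r < x ∧ (x : EReal) < c} ∈ leftFilter c := by
  have : (Set.Ioi (r : EReal)) ∩ Set.Iio c ∈ nhdsWithin c (Set.Iio c) :=
    inter_mem (mem_nhdsWithin_of_mem_nhds (Ioi_mem_nhds h)) self_mem_nhdsWithin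
  have h2 : (fun x : ℝ => (x : EReal)) ⁻¹' (Set.Ioi (r : EReal) ∩ Set.Iio c) ∈ leftFilter c :=
    preimage_mem_comap this
  refine mem_of_superset h2 ?_
  intro x hx
  exact ⟨EReal.coe_lt_coe_iff.1 hx.1, hx.2⟩


/-- key calculus lemma: from `aₙⁿ → γ ∈ (0,1)` deduce `n(1-aₙ) → -log γ`. -/
lemma aux_of_pow_tendsto {a : ℕ → ℝ} {γ : ℝ} (h0 : ∀ n, 0 ≤ a n) (h1 : ∀ n, a n ≤ 1)
    (hγ : γ ∈ Set.Ioo (0:ℝ) 1) (h : Tendsto (fun n => a n ^ n) atTop (𝓝 γ)) :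
    Tendsto (fun n : ℕ => (n : ℝ) * (1 - a n)) atTop (𝓝 (-Real.log γ)) ∧
      (∀ᶠ n in atTop, a n < 1) ∧ Tendsto a atTop (𝓝 1) := by
  have tendsto_log_slope : Tendsto (fun t : ℝ => Real.log t / (t - 1)) (𝓝[≠] (1:ℝ)) (𝓝 1) := by
    have h := (hasDerivAt_iff_tendsto_slope).1 (Real.hasDerivAt_log one_ne_zero)
    rw [inv_one] at h
    refine h.congr (fun t => ?_)
    rw [slope_def_field, Real.log_one, sub_zero]
  have hpos : ∀ᶠ n in atTop, 0 < a n := by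
    have h2 : ∀ᶠ n in atTop, γ / 2 < a n ^ n := h.eventually_const_lt (by linarith [hγ.1])
    filter_upwards [h2, eventually_ge_atTop 1] with n hn hn1
    rcases lt_or_ge 0 (a n) with h' | h'
    · exact h'
    · have : a n = 0 := le_antisymm h' (h0 n)
      rw [this, zero_pow (by omega)] at hn
      linarith [hγ.1]
  have hlt1 : ∀ᶠ n in atTop, a n < 1 := by
    have h2 : ∀ᶠ n in atTop, a n ^ n < (1 + γ) / 2 := h.eventually_lt_const (by linarith [hγ.2])
    filter_upwards [h2] with n hn
    rcases lt_or_eq_of_le (h1 n) with h' | h'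
    · exact h'
    · rw [h', one_pow] at hn; linarith [hγ.2]
  have hlog : Tendsto (fun n : ℕ => (n : ℝ) * Real.log (a n)) atTop (𝓝 (Real.log γ)) := by
    have := (Real.continuousAt_log (ne_of_gt hγ.1)).tendsto.comp h
    refine this.congr (fun n => ?_)
    simp [Function.comp, Real.log_pow]
  have hloga : Tendsto (fun n => Real.log (a n)) atTop (𝓝 0) := by
    have h2 := hlog.mul (tendsto_inv_atTop_nhds_zero_nat (𝕜 := ℝ))
    rw [mul_zero] at h2
    refine h2.congr' ?_
    filter_upwards [eventually_ge_atTop 1] with n hn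
    have : (n : ℝ) ≠ 0 := Nat.cast_ne_zero.2 (by omega)
    field_simp
  have ha1 : Tendsto a atTop (𝓝 1) := by
    have h2 := (Real.continuous_exp.tendsto 0).comp hloga
    rw [Real.exp_zero] at h2
    refine h2.congr' ?_
    filter_upwards [hpos] with n hn
    simp [Function.comp, Real.exp_log hn]
  have hslope : Tendsto (fun n => Real.log (a n) / (a n - 1)) atTop (𝓝 1) := by
    refine tendsto_log_slope.comp ?_
    rw [tendsto_nhdsWithin_iff]
    exact ⟨ha1, hlt1.mono fun n hn => ne_of_lt hn⟩
  refine ⟨?_, hlt1, ha1⟩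
  have h2 := (hlog.neg).div hslope one_ne_zero
  rw [div_one] at h2
  refine h2.congr' ?_
  filter_upwards [hpos, hlt1] with n hn hn1
  have hlne : Real.log (a n) ≠ 0 := ne_of_lt (Real.log_neg hn hn1)
  have hane : a n - 1 ≠ 0 := sub_ne_zero.2 (ne_of_lt hn1)
  simp only [Pi.div_apply]
  field_simp
  ring


/-- key calculus lemma: from `n(1-aₙ) → τ > 0` (with `aₙ ∈ (0,1)` eventually)
deduce `aₙⁿ → exp (-τ)`. -/
lemma pow_tendsto_of_aux {a : ℕ → ℝ} {τ : ℝ} (hτ : 0 < τ)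
    (hpos : ∀ᶠ n in atTop, 0 < a n) (hlt1 : ∀ᶠ n in atTop, a n < 1)
    (h : Tendsto (fun n : ℕ => (n : ℝ) * (1 - a n)) atTop (𝓝 τ)) :
    Tendsto (fun n => a n ^ n) atTop (𝓝 (Real.exp (-τ))) := by
  have tendsto_log_slope : Tendsto (fun t : ℝ => Real.log t / (t - 1)) (𝓝[≠] (1:ℝ)) (𝓝 1) := by
    have h := (hasDerivAt_iff_tendsto_slope).1 (Real.hasDerivAt_log one_ne_zero)
    rw [inv_one] at h
    refine h.congr (fun t => ?_)
    rw [slope_def_field, Real.log_one, sub_zero]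
  have ha1 : Tendsto a atTop (𝓝 1) := by
    have h2 := h.mul (tendsto_inv_atTop_nhds_zero_nat (𝕜 := ℝ))
    rw [mul_zero] at h2
    have h3 : Tendsto (fun n => 1 - a n) atTop (𝓝 0) := by
      refine h2.congr' ?_
      filter_upwards [eventually_ge_atTop 1] with n hn
      have : (n : ℝ) ≠ 0 := Nat.cast_ne_zero.2 (by omega)
      field_simp
    have h4 := (tendsto_const_nhds (x := (1:ℝ)) (f := atTop)).sub h3
    rw [sub_zero] at h4
    refine h4.congr (fun n => by ring)
  have hslope : Tendsto (fun n => Real.log (a n) / (a n - 1)) atTop (𝓝 1) := by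
    refine tendsto_log_slope.comp ?_
    rw [tendsto_nhdsWithin_iff]
    exact ⟨ha1, hlt1.mono fun n hn => ne_of_lt hn⟩
  have hnlog : Tendsto (fun n : ℕ => (n : ℝ) * Real.log (a n)) atTop (𝓝 (-τ)) := by
    have h2 := (h.neg).mul hslope
    rw [mul_one] at h2
    refine h2.congr' ?_
    filter_upwards [hlt1] with n hn
    have hane : a n - 1 ≠ 0 := sub_ne_zero.2 (ne_of_lt hn)
    field_simp
    ring
  have h2 := (Real.continuous_exp.tendsto _).comp hnlog
  refine h2.congr' ?_
  filter_upwards [hpos] with n hn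
  simp only [Function.comp]
  rw [Real.exp_nat_mul, Real.exp_log hn]

lemma forward (hG : IsDistFun G) (hreg : IsRegularDF G) :
    ∃ γ ∈ Set.Ioo (0:ℝ) 1, ∃ v : ℕ → ℝ, Tendsto (fun n => G (v n) ^ n) atTop (𝓝 γ) := by
  obtain ⟨hmono, hrc, hbot, _htop⟩ := hG
  have hG' : IsDistFun G := ⟨hmono, hrc, hbot, _htop⟩
  have hne : (leftFilter (GstarE G)).NeBot := leftFilter_neBot (bot_lt_gstar hG')
  -- existence of high points below Gstar
  have exists_r : ∀ δ : ℝ, 0 < δ → ∃ r : ℝ, (r : EReal) < GstarE G ∧ 1 - δ < G r := by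
    intro δ hδ
    have h1 : ∀ᶠ x in leftFilter (GstarE G), 1 - δ < G x :=
      hreg.1.eventually_const_lt (by linarith)
    obtain ⟨r, hr1, hr2⟩ := (h1.and (eventually_of_mem Iio_mem_leftFilter (fun x hx => hx))).exists
    exact ⟨r, hr2, hr1⟩
  set S : ℕ → Set ℝ := fun n => {x | 1 - 1/(n:ℝ) ≤ G x} with hS
  set v : ℕ → ℝ := fun n => sInf (S n) with hv
  -- nonemptiness with witness below Gstar
  have hSwit : ∀ n : ℕ, 1 ≤ n → ∃ r : ℝ, (r : EReal) < GstarE G ∧ r ∈ S n := by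
    intro n hn
    obtain ⟨r, hr1, hr2⟩ := exists_r (1/(n:ℝ)) (by positivity)
    exact ⟨r, hr1, le_of_lt hr2⟩
  have hSne : ∀ n : ℕ, 1 ≤ n → (S n).Nonempty := fun n hn =>
    (hSwit n hn).imp fun r hr => hr.2
  have hSbdd : ∀ n : ℕ, 2 ≤ n → BddBelow (S n) := by
    intro n hn
    have h2 : (0:ℝ) < 1 - 1/(n:ℝ) := by
      have : 1/(n:ℝ) ≤ 1/2 := by
        apply one_div_le_one_div_of_le <;> [norm_num; exact_mod_cast hn]
      linarith
    obtain ⟨x0, hx0⟩ := (hbot.eventually_lt_const h2).exists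
    refine ⟨x0, fun y hy => ?_⟩
    by_contra h'
    push_neg at h'
    exact absurd (le_trans hy (hmono (le_of_lt h'))) (not_le.2 hx0)
  have hv_mem : ∀ n : ℕ, 2 ≤ n → 1 - 1/(n:ℝ) ≤ G (v n) := by
    intro n hn
    by_contra h'
    push_neg at h'
    have h1 : ∀ᶠ x in nhdsWithin (v n) (Set.Ici (v n)), G x < 1 - 1/(n:ℝ) :=
      (hrc (v n)).eventually_lt_const h'
    rw [eventually_iff, mem_nhdsGE_iff_exists_Ico_subset] at h1
    obtain ⟨u, hu, hsub⟩ := h1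
    obtain ⟨y, hy, hyu⟩ := (csInf_lt_iff (hSbdd n hn) (hSne n (by omega))).1 hu
    have hylb : v n ≤ y := csInf_le (hSbdd n hn) hy
    have hy' : 1 - 1/(n:ℝ) ≤ G y := hy
    have h3 : G y < 1 - 1/(n:ℝ) := hsub ⟨hylb, hyu⟩
    linarith
  have hv_left : ∀ n : ℕ, 2 ≤ n → Function.leftLim G (v n) ≤ 1 - 1/(n:ℝ) := by
    intro n hn
    refine le_of_tendsto (hmono.tendsto_leftLim (v n)) ?_
    filter_upwards [self_mem_nhdsWithin] with x hx
    have : x ∉ S n := notMem_of_lt_csInf hx (hSbdd n hn)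
    exact le_of_not_ge (fun h' => this h')
  have hvlt : ∀ n : ℕ, 2 ≤ n → (v n : EReal) < GstarE G := by
    intro n hn
    obtain ⟨r, hr1, hr2⟩ := hSwit n (by omega)
    have : v n ≤ r := csInf_le (hSbdd n hn) hr2
    exact lt_of_le_of_lt (EReal.coe_le_coe_iff.2 this) hr1
  have hvge : ∀ r : ℝ, G r < 1 → ∀ n : ℕ, 1 ≤ n → 1/(n:ℝ) < 1 - G r → r ≤ v n := by
    intro r hr n hn h1n
    refine le_csInf (hSne n hn) (fun y hy => ?_)
    have : G r < G y := by
      have : 1 - 1/(n:ℝ) ≤ G y := hy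
      linarith
    exact le_of_lt (lt_of_not_ge fun h' => absurd (hmono h') (not_le.2 this))
  -- v n → Gstar from the left
  have hvtendE : Tendsto (fun n => ((v n : ℝ) : EReal)) atTop (nhdsWithin (GstarE G) (Set.Iio (GstarE G))) := by
    rw [tendsto_nhdsWithin_iff]
    constructor
    · refine tendsto_order.2 ⟨?_, ?_⟩
      · intro a ha
        obtain ⟨q, hq1, hq2⟩ := EReal.exists_rat_btwn_of_lt ha
        obtain ⟨q', hq'1, hq'2⟩ := EReal.exists_rat_btwn_of_lt hq2
        have hGq' : G (q' : ℝ) < 1 := lt_one_of_lt_gstar hG' hq'2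
        obtain ⟨N, hN⟩ := exists_nat_one_div_lt (by linarith : (0:ℝ) < 1 - G (q':ℝ))
        filter_upwards [eventually_ge_atTop (N + 1), eventually_ge_atTop 2] with n hn hn2
        have h1n : 1/(n:ℝ) < 1 - G (q' : ℝ) := by
          refine lt_of_le_of_lt ?_ hN
          apply one_div_le_one_div_of_le
          · positivity
          · exact_mod_cast hn
        have := hvge (q' : ℝ) hGq' n (by omega) h1n
        calc a < ((q : ℝ) : EReal) := hq1
          _ < ((q' : ℝ) : EReal) := by exact_mod_cast hq'1
          _ ≤ ((v n : ℝ) : EReal) := EReal.coe_le_coe_iff.2 this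
      · intro b hb
        filter_upwards [eventually_ge_atTop 2] with n hn
        exact lt_trans (hvlt n hn) hb
    · filter_upwards [eventually_ge_atTop 2] with n hn
      exact hvlt n hn
  have hvtend : Tendsto v atTop (leftFilter (GstarE G)) := by
    rw [leftFilter, tendsto_comap_iff]
    exact hvtendE
  have hratio : Tendsto (fun n => (1 - Function.leftLim G (v n)) / (1 - G (v n)))
      atTop (𝓝 1) := hreg.2.comp hvtend
  -- n (1 - G (v n)) → 1
  have hGvlt1 : ∀ n : ℕ, 2 ≤ n → G (v n) < 1 := fun n hn => lt_one_of_lt_gstar hG' (hvlt n hn)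
  have hmain : Tendsto (fun n : ℕ => (n:ℝ) * (1 - G (v n))) atTop (𝓝 1) := by
    have hub : ∀ᶠ n : ℕ in atTop, (n:ℝ) * (1 - G (v n)) ≤ 1 := by
      filter_upwards [eventually_ge_atTop 2] with n hn
      have h1 : 1 - G (v n) ≤ 1/(n:ℝ) := by linarith [hv_mem n hn]
      have hn0 : (0:ℝ) < n := by exact_mod_cast (by omega : 0 < n)
      calc (n:ℝ) * (1 - G (v n)) ≤ (n:ℝ) * (1/(n:ℝ)) := by
            exact mul_le_mul_of_nonneg_left h1 (le_of_lt hn0)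
        _ = 1 := by field_simp
    have hinv : Tendsto (fun n => ((1 - Function.leftLim G (v n)) / (1 - G (v n)))⁻¹)
        atTop (𝓝 1) := by
      have := hratio.inv₀ one_ne_zero
      rwa [inv_one] at this
    have hlb : ∀ᶠ n : ℕ in atTop, ((1 - Function.leftLim G (v n)) / (1 - G (v n)))⁻¹ ≤
        (n:ℝ) * (1 - G (v n)) := by
      filter_upwards [eventually_ge_atTop 2,
        hratio.eventually_const_lt (by norm_num : (1:ℝ)/2 < 1)] with n hn hr
      have hn0 : (0:ℝ) < n := by exact_mod_cast (by omega : 0 < n)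
      have hLle := hv_left n hn
      have h1L : 1/(n:ℝ) ≤ 1 - Function.leftLim G (v n) := by linarith
      have hLpos : (0:ℝ) < 1 - Function.leftLim G (v n) := lt_of_lt_of_le (by positivity) h1L
      have hGvpos : (0:ℝ) < 1 - G (v n) := by linarith [hGvlt1 n hn]
      rw [inv_div, div_le_iff₀ hLpos]
      have hnL : 1 ≤ (n:ℝ) * (1 - Function.leftLim G (v n)) := by
        have h2 := mul_le_mul_of_nonneg_left h1L (le_of_lt hn0)
        have h3 : (n:ℝ) * (1/(n:ℝ)) = 1 := by field_simp
        linarith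
      nlinarith [mul_le_mul_of_nonneg_left hnL (le_of_lt hGvpos)]
    exact tendsto_of_tendsto_of_tendsto_of_le_of_le' hinv tendsto_const_nhds hlb hub
  -- conclude
  refine ⟨Real.exp (-1), ⟨Real.exp_pos _, Real.exp_lt_one_iff.2 (by norm_num)⟩, v, ?_⟩
  refine pow_tendsto_of_aux one_pos ?_ ?_ hmain
  · filter_upwards [eventually_ge_atTop 2] with n hn
    have h1 : 1/(n:ℝ) ≤ 1/2 := by
      apply one_div_le_one_div_of_le <;> [norm_num; exact_mod_cast hn]
    linarith [hv_mem n hn]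
  · filter_upwards [eventually_ge_atTop 2] with n hn
    exact hGvlt1 n hn

lemma backward (hG : IsDistFun G) {γ : ℝ} (hγ : γ ∈ Set.Ioo (0:ℝ) 1) {v : ℕ → ℝ}
    (h : Tendsto (fun n => G (v n) ^ n) atTop (𝓝 γ)) : IsRegularDF G := by
  obtain ⟨hmono, hrc, hbot, htop⟩ := hG
  have hG' : IsDistFun G := ⟨hmono, hrc, hbot, htop⟩
  obtain ⟨hmain, hlt1, hG1⟩ :=
    aux_of_pow_tendsto (fun n => nonneg hG' (v n)) (fun n => le_one hG' (v n)) hγ h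
  set τ : ℝ := -Real.log γ with hτdef
  have hτ : 0 < τ := by
    have := Real.log_neg hγ.1 hγ.2
    simp [hτdef]; linarith
  -- high points below Gstar
  have exists_r : ∀ δ : ℝ, 0 < δ → ∃ r : ℝ, (r : EReal) < GstarE G ∧ 1 - δ < G r := by
    intro δ hδ
    obtain ⟨n, hn1, hn2⟩ := ((hG1.eventually_const_lt (by linarith : 1 - δ < 1)).and hlt1).exists
    obtain ⟨m, hm1, hm2⟩ := ((hG1.eventually_const_lt hn2).and hlt1).exists
    have h1 : v n < v m := by
      by_contra h'
      push_neg at h'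
      exact absurd (hmono h') (not_le.2 hm1)
    exact ⟨v n, lt_of_lt_of_le (EReal.coe_lt_coe_iff.2 h1) (le_gstar hm2), hn1⟩
  have hconj1 : Tendsto G (leftFilter (GstarE G)) (𝓝 1) := by
    refine tendsto_order.2 ⟨fun b hb => ?_, fun b hb => ?_⟩
    · obtain ⟨r, hr1, hr2⟩ := exists_r (1 - b) (by linarith)
      filter_upwards [Ioo_mem_leftFilter hr1] with y hy
      have := hmono (le_of_lt hy.1)
      linarith
    · filter_upwards with y
      exact lt_of_le_of_lt (le_one hG' y) hb
  refine ⟨hconj1, ?_⟩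
  by_contra hcon
  rw [Metric.tendsto_nhds] at hcon
  push_neg at hcon
  obtain ⟨ε, hε, hfreq⟩ := hcon
  -- extract a sequence of big-jump points tending to Gstar from the left
  have hfreq2 : ∃ᶠ (y : ℝ) in leftFilter (GstarE G),
      ((y : EReal) < GstarE G ∧
        (1 + ε) * (1 - G y) ≤ 1 - Function.leftLim G y) := by
    refine (hfreq.and_eventually (eventually_of_mem Iio_mem_leftFilter fun y hy => hy)).mono ?_
    rintro y ⟨hd, hy⟩
    refine ⟨hy, ?_⟩
    have hGy : G y < 1 := lt_one_of_lt_gstar hG' hy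
    have hpos : (0:ℝ) < 1 - G y := by linarith
    have hL : Function.leftLim G y ≤ G y := hmono.leftLim_le le_rfl
    have hratio1 : 1 ≤ (1 - Function.leftLim G y) / (1 - G y) := by
      rw [le_div_iff₀ hpos]; linarith
    rw [Real.dist_eq, abs_of_nonneg (by linarith)] at hd
    have hd' : 1 + ε ≤ (1 - Function.leftLim G y) / (1 - G y) := by linarith
    rw [le_div_iff₀ hpos] at hd'
    exact hd'
  haveI : (leftFilter (GstarE G)).IsCountablyGenerated := by
    rw [leftFilter]; infer_instance
  obtain ⟨x, hxt, hxp⟩ := exists_seq_forall_of_frequently hfreq2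
  set L : ℝ → ℝ := Function.leftLim G with hLdef
  set a : ℕ → ℝ := fun k => 1 - G (x k) with hadef
  set b : ℕ → ℝ := fun k => 1 - L (x k) with hbdef
  have hapos : ∀ k, 0 < a k := fun k => by
    have := lt_one_of_lt_gstar hG' (hxp k).1
    simp only [hadef]; linarith
  have hba : ∀ k, (1 + ε) * a k ≤ b k := fun k => (hxp k).2
  have ha0 : Tendsto a atTop (𝓝 0) := by
    have h2 := (hconj1.comp hxt)
    have h3 := (tendsto_const_nhds (x := (1:ℝ)) (f := atTop)).sub h2
    rw [sub_self] at h3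
    exact h3
  set s : ℝ := Real.sqrt (1 + ε) with hsdef
  have hs2 : s * s = 1 + ε := Real.mul_self_sqrt (by linarith)
  have hs1 : 1 < s := by nlinarith [Real.sqrt_nonneg (1 + ε)]
  set c : ℕ → ℝ := fun k => s * a k with hcdef
  have hcpos : ∀ k, 0 < c k := fun k => by
    have := hapos k; simp only [hcdef]; nlinarith
  have hc0 : Tendsto c atTop (𝓝 0) := by
    have := ha0.const_mul s
    rwa [mul_zero] at this
  set N : ℕ → ℕ := fun k => ⌈τ / c k⌉₊ with hNdef
  have hNge : ∀ k, τ / c k ≤ (N k : ℝ) := fun k => Nat.le_ceil _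
  have hNlt : ∀ k, (N k : ℝ) < τ / c k + 1 := fun k =>
    Nat.ceil_lt_add_one (le_of_lt (div_pos hτ (hcpos k)))
  have hNtend : Tendsto N atTop atTop := by
    rw [tendsto_atTop]
    intro m
    have hdiv : Tendsto (fun k => τ / c k) atTop atTop := by
      have h1 : Tendsto c atTop (nhdsWithin 0 (Set.Ioi 0)) := by
        rw [tendsto_nhdsWithin_iff]
        exact ⟨hc0, Eventually.of_forall fun k => hcpos k⟩
      have h2 : Tendsto (fun k => (c k)⁻¹) atTop atTop :=
        tendsto_inv_nhdsGT_zero.comp h1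
      have h3 := h2.const_mul_atTop hτ
      refine h3.congr fun k => ?_
      rw [div_eq_mul_inv]
    filter_upwards [hdiv.eventually_ge_atTop (m : ℝ)] with k hk
    exact_mod_cast le_trans hk (hNge k)
  -- the contradiction
  set δ : ℝ := τ * (s - 1) / (2 * s) with hδdef
  have hδ : 0 < δ := by
    apply div_pos
    · nlinarith
    · nlinarith
  obtain ⟨M, hM⟩ := (Metric.tendsto_atTop.1 hmain) δ hδ
  obtain ⟨k, hk1, hk2⟩ :=
    ((hNtend.eventually_ge_atTop M).and (ha0.eventually_le_const hδ)).exists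
  replace hk2 : a k ≤ δ := hk2
  replace hk1 : M ≤ N k := hk1
  have hdist := hM (N k) hk1
  rw [Real.dist_eq] at hdist
  have hs0 : s ≠ 0 := by positivity
  have ha0' : a k ≠ 0 := ne_of_gt (hapos k)
  clear_value τ s δ
  rcases le_or_gt (x k) (v (N k)) with hle | hlt
  · -- G (v (N k)) ≥ G (x k), so N k * (1 - G (v (N k))) is too small
    have h1 : 1 - G (v (N k)) ≤ a k := by
      have := hmono hle; simp only [hadef]; linarith
    have h2 : (N k : ℝ) * (1 - G (v (N k))) ≤ (N k : ℝ) * a k :=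
      mul_le_mul_of_nonneg_left h1 (Nat.cast_nonneg _)
    have h3 : (N k : ℝ) * a k ≤ (τ / c k + 1) * a k :=
      mul_le_mul_of_nonneg_right (le_of_lt (hNlt k)) (le_of_lt (hapos k))
    have h4 : (τ / c k + 1) * a k = τ / s + a k := by
      simp only [hcdef]
      field_simp
    have h5 : τ / s + δ = τ - δ := by
      simp only [hδdef]
      field_simp
      ring
    rw [abs_lt] at hdist
    have hfin : (N k : ℝ) * (1 - G (v (N k))) ≤ τ - δ :=
      calc (N k : ℝ) * (1 - G (v (N k))) ≤ (N k : ℝ) * a k := h2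
        _ ≤ (τ / c k + 1) * a k := h3
        _ = τ / s + a k := h4
        _ ≤ τ / s + δ := add_le_add_right hk2 _
        _ = τ - δ := h5
    linarith [hdist.1]
  · -- G (v (N k)) ≤ leftLim G (x k), so N k * (1 - G (v (N k))) is too big
    have h1 : b k ≤ 1 - G (v (N k)) := by
      have := hmono.le_leftLim hlt; simp only [hbdef, hLdef]; linarith
    have hbpos : 0 < b k := lt_of_lt_of_le (by nlinarith [hapos k]) (hba k)
    have h2 : (N k : ℝ) * b k ≤ (N k : ℝ) * (1 - G (v (N k))) :=
      mul_le_mul_of_nonneg_left h1 (Nat.cast_nonneg _)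
    have h3 : (τ / c k) * b k ≤ (N k : ℝ) * b k :=
      mul_le_mul_of_nonneg_right (hNge k) (le_of_lt hbpos)
    have h4 : (τ / c k) * ((1 + ε) * a k) ≤ (τ / c k) * b k :=
      mul_le_mul_of_nonneg_left (hba k) (le_of_lt (div_pos hτ (hcpos k)))
    have h5 : (τ / c k) * ((1 + ε) * a k) = τ * s := by
      simp only [hcdef]
      rw [← hs2]
      field_simp
    have h6 : τ + δ ≤ τ * s := by
      have h2s : (0:ℝ) < 2 * s := by nlinarith
      have hts : 0 ≤ τ * (s - 1) := mul_nonneg hτ.le (by linarith)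
      have key : δ ≤ τ * (s - 1) := by
        rw [hδdef, div_le_iff₀ h2s]
        nlinarith [mul_nonneg hts (by linarith : (0:ℝ) ≤ 2 * s - 1)]
      nlinarith [key]
    rw [abs_lt] at hdist
    have hfin : τ + δ ≤ (N k : ℝ) * (1 - G (v (N k))) :=
      calc τ + δ ≤ τ * s := h6
        _ = τ / c k * ((1 + ε) * a k) := h5.symm
        _ ≤ τ / c k * b k := h4
        _ ≤ (N k : ℝ) * b k := h3
        _ ≤ (N k : ℝ) * (1 - G (v (N k))) := h2
    linarith [hdist.2]

end OBrien

theorem obrien_regularity_characterization (G : ℝ → ℝ) (hG : IsDistFun G) :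
    IsRegularDF G ↔
      ∃ γ ∈ Set.Ioo (0 : ℝ) 1, ∃ v : ℕ → ℝ,
        Tendsto (fun n => G (v n) ^ n) atTop (nhds γ) := by
  constructor
  · intro hreg
    exact OBrien.forward hG hreg
  · rintro ⟨γ, hγ, v, hv⟩
    exact OBrien.backward hG hγ hv
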